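/- Let h > 0, t1 = t0 + h. Assume ∇ℓ is Lipschitz with constant c_l > 0 and bounded by B > 0 in Frobenius norm. Let V0 ∈ ℝ^{n×r} have orthonormal columns, let K : [t0,t1] → ℝ^{m×r} satisfy K'(t) = −∇ℓ(K(t)V0ᵀ)V0, and set Y0 := K(t0)V0ᵀ. Then ‖∇ℓ(Y0) V0 V0ᵀ + (1/h)(K(t1)V0ᵀ − Y0)‖ ≤ c_l B h. -/

import Mathlib

open Matrix Set MeasureTheory Filter

attribute [local instance] Matrix.frobeniusNormedAddCommGroup Matrix.frobeniusNormedSpace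

/-- The continuous linear functional `H ↦ ⟨G, H⟩ = tr(Gᵀ H)`, i.e. pairing with `G` in the
Frobenius inner product.  `hgrad : ∀ Y, HasFDerivAt ℓ (frobCLM (G Y)) Y` then states that
`G Y` is the gradient of `ℓ` at `Y` with respect to the Frobenius inner product. -/
noncomputable def frobCLM {m n : ℕ} (G : Matrix (Fin m) (Fin n) ℝ) :
    Matrix (Fin m) (Fin n) ℝ →L[ℝ] ℝ :=
  LinearMap.toContinuousLinearMap
    { toFun := fun H => (Gᵀ * H).trace
      map_add' := by intro x y; simp [Matrix.mul_add]
      map_smul' := by intro c x; simp [Matrix.mul_smul] }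



lemma frob_sq {a b : ℕ} (A : Matrix (Fin a) (Fin b) ℝ) : ‖A‖ ^ 2 = (A * Aᵀ).trace := by
  have h := Matrix.frobenius_norm_def A
  have hnn : (0:ℝ) ≤ ∑ i, ∑ j, ‖A i j‖ ^ (2:ℝ) := by positivity
  rw [h, ← Real.rpow_natCast _ 2, ← Real.rpow_mul hnn]
  norm_num
  simp [Matrix.trace, Matrix.mul_apply, Real.rpow_two, sq_abs, Real.norm_eq_abs, sq]

lemma norm_mul_vt {a n r : ℕ} (V0 : Matrix (Fin n) (Fin r) ℝ) (hV0 : V0ᵀ * V0 = 1)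
    (M : Matrix (Fin a) (Fin r) ℝ) : ‖M * V0ᵀ‖ = ‖M‖ := by
  have h1 : ‖M * V0ᵀ‖ ^ 2 = ‖M‖ ^ 2 := by
    rw [frob_sq, frob_sq]
    congr 1
    rw [Matrix.transpose_mul, Matrix.transpose_transpose,
      Matrix.mul_assoc, ← Matrix.mul_assoc V0ᵀ, hV0, Matrix.one_mul]
  nlinarith [norm_nonneg (M * V0ᵀ), norm_nonneg M]

-- ‖A * (V0 * V0ᵀ)‖ ≤ ‖A‖
lemma norm_mul_proj_le {a n r : ℕ} (V0 : Matrix (Fin n) (Fin r) ℝ) (hV0 : V0ᵀ * V0 = 1)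
    (A : Matrix (Fin a) (Fin n) ℝ) : ‖A * (V0 * V0ᵀ)‖ ≤ ‖A‖ := by
  set P : Matrix (Fin n) (Fin n) ℝ := V0 * V0ᵀ with hP
  have hPP : P * P = P := by
    rw [hP, Matrix.mul_assoc, ← Matrix.mul_assoc V0ᵀ, hV0, Matrix.one_mul]
  have hPt : Pᵀ = P := by rw [hP, Matrix.transpose_mul, Matrix.transpose_transpose]
  have key : ‖A‖ ^ 2 = ‖A * P‖ ^ 2 + ‖A * (1 - P)‖ ^ 2 := by
    rw [frob_sq, frob_sq, frob_sq]
    simp only [Matrix.transpose_mul, Matrix.transpose_sub, Matrix.transpose_one,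
      Matrix.transpose_transpose]
    rw [hPt, Matrix.mul_assoc A P, ← Matrix.mul_assoc P P, hPP]
    have hQ : (1 - P) * (1 - P) = 1 - P := by
      rw [Matrix.sub_mul, Matrix.mul_sub, Matrix.mul_sub, Matrix.one_mul, Matrix.one_mul,
        Matrix.mul_one, hPP]
      simp
    rw [show A * (1 - P) * ((1 - P) * Aᵀ) = A * ((1 - P) * Aᵀ) by
      rw [Matrix.mul_assoc, ← Matrix.mul_assoc (1 - P) (1 - P), hQ]]
    rw [← Matrix.trace_add, ← Matrix.mul_add, ← Matrix.add_mul]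
    simp
  nlinarith [norm_nonneg (A * P), norm_nonneg A, sq_nonneg ‖A * (1 - P)‖]

/-- right multiplication by a fixed matrix, as a CLM -/
noncomputable def rmulCLM {a b c : ℕ} (W : Matrix (Fin b) (Fin c) ℝ) :
    Matrix (Fin a) (Fin b) ℝ →L[ℝ] Matrix (Fin a) (Fin c) ℝ :=
  LinearMap.toContinuousLinearMap
    { toFun := fun X => X * W
      map_add' := by intro x y; simp [Matrix.add_mul]
      map_smul' := by intro s x; simp [Matrix.smul_mul] }

/-- along the K-step on `[t0, t0+h]` with `Y0 = K(t0)V0ᵀ`,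
`‖∇ℓ(Y0)V0V0ᵀ + (1/h)(K(t1)V0ᵀ − Y0)‖ ≤ c_l B h`. -/
theorem kstep_consistency_bound {m n r : ℕ}
    (ℓ : Matrix (Fin m) (Fin n) ℝ → ℝ)
    (G : Matrix (Fin m) (Fin n) ℝ → Matrix (Fin m) (Fin n) ℝ)
    (hgrad : ∀ Y, HasFDerivAt ℓ (frobCLM (G Y)) Y)
    (cl B : ℝ) (hcl : 0 < cl) (hB : 0 < B)
    (hlip : ∀ Z1 Z2, ‖G Z1 - G Z2‖ ≤ cl * ‖Z1 - Z2‖)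
    (hbound : ∀ Z, ‖G Z‖ ≤ B)
    (t0 t1 h : ℝ) (hh : 0 < h) (ht1 : t1 = t0 + h)
    (V0 : Matrix (Fin n) (Fin r) ℝ) (hV0 : V0ᵀ * V0 = 1)
    (K : ℝ → Matrix (Fin m) (Fin r) ℝ)
    (hK : ∀ t ∈ Set.Icc t0 t1, HasDerivAt K (-(G (K t * V0ᵀ) * V0)) t) :
    ‖G (K t0 * V0ᵀ) * V0 * V0ᵀ + (1 / h) • (K t1 * V0ᵀ - K t0 * V0ᵀ)‖ ≤ cl * B * h := by
  have ht01 : t0 ≤ t1 := by rw [ht1]; linarith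
  set P : Matrix (Fin n) (Fin n) ℝ := V0 * V0ᵀ with hPdef
  set F : ℝ → Matrix (Fin m) (Fin n) ℝ := fun t => K t * V0ᵀ with hFdef
  -- derivative of F
  have hF : ∀ t ∈ Set.Icc t0 t1, HasDerivAt F (-(G (F t) * P)) t := by
    intro t ht
    have := ((rmulCLM (a := m) V0ᵀ).hasFDerivAt).comp_hasDerivAt t (hK t ht)
    refine this.congr_deriv ?_
    symm
    show -(G (K t * V0ᵀ) * P) = rmulCLM V0ᵀ (-(G (K t * V0ᵀ) * V0))
    simp only [rmulCLM, LinearMap.coe_toContinuousLinearMap', LinearMap.coe_mk, AddHom.coe_mk,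
      map_neg]
    rw [hPdef, Matrix.mul_assoc]
  -- continuity
  have hGlip : LipschitzWith (Real.toNNReal cl) G := by
    apply LipschitzWith.of_dist_le_mul
    intro x y
    simpa [dist_eq_norm, Real.coe_toNNReal cl hcl.le] using hlip x y
  have hKcont : ContinuousOn K (Set.Icc t0 t1) := fun t ht =>
    (hK t ht).continuousAt.continuousWithinAt
  have hgcont : ContinuousOn (fun s => -(G (F s) * P)) (Set.Icc t0 t1) := by
    have h1 : ContinuousOn F (Set.Icc t0 t1) :=
      (rmulCLM (a := m) V0ᵀ).continuous.comp_continuousOn hKcont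
    have h2 : ContinuousOn (fun s => G (F s)) (Set.Icc t0 t1) :=
      hGlip.continuous.comp_continuousOn h1
    exact ((rmulCLM (a := m) P).continuous.comp_continuousOn h2).neg
  have huIcc : Set.uIcc t0 t1 = Set.Icc t0 t1 := Set.uIcc_of_le ht01
  have hint : @IntervalIntegrable (Matrix (Fin m) (Fin n) ℝ)
      PseudoMetricSpace.toUniformSpace.toTopologicalSpace _
      (fun s => -(G (F s) * P)) volume t0 t1 := by
    apply ContinuousOn.intervalIntegrable
    rwa [huIcc]
  -- fundamental theorem of calculus
  have hftc : ∫ s in t0..t1, -(G (F s) * P) = F t1 - F t0 := by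
    apply intervalIntegral.integral_eq_sub_of_hasDerivAt
    · intro t ht; exact hF t (huIcc ▸ ht)
    · exact hint
  set C : Matrix (Fin m) (Fin n) ℝ := G (F t0) * P with hCdef
  have hsplit : ∫ s in t0..t1, (C - G (F s) * P) = (t1 - t0) • C + (F t1 - F t0) := by
    have : (fun s => C - G (F s) * P) = fun s => C + -(G (F s) * P) := by
      funext s; rw [sub_eq_add_neg]
    rw [this, intervalIntegral.integral_add intervalIntegrable_const hint,
      intervalIntegral.integral_const, hftc]
  -- rewrite the LHS
  have hLHS : G (K t0 * V0ᵀ) * V0 * V0ᵀ + (1 / h) • (K t1 * V0ᵀ - K t0 * V0ᵀ)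
      = (1 / h) • ∫ s in t0..t1, (C - G (F s) * P) := by
    rw [hsplit, smul_add, smul_smul]
    have h1 : 1 / h * (t1 - t0) = 1 := by
      rw [ht1]; field_simp; ring
    rw [h1, one_smul, hCdef]
    show G (K t0 * V0ᵀ) * V0 * V0ᵀ + _ = G (K t0 * V0ᵀ) * (V0 * V0ᵀ) + _
    rw [Matrix.mul_assoc]
  rw [hLHS]
  -- bound the integral
  have hKbd : ∀ s ∈ Set.Icc t0 t1, ‖K s - K t0‖ ≤ B * ‖s - t0‖ := by
    intro s hs
    apply Convex.norm_image_sub_le_of_norm_hasDerivWithin_le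
      (f' := fun t => -(G (K t * V0ᵀ) * V0)) (fun t ht => (hK t ht).hasDerivWithinAt) ?_
      (convex_Icc t0 t1) (Set.left_mem_Icc.mpr ht01) hs
    intro t _
    rw [norm_neg]
    calc ‖G (K t * V0ᵀ) * V0‖ = ‖G (K t * V0ᵀ) * V0 * V0ᵀ‖ := (norm_mul_vt V0 hV0 _).symm
      _ = ‖G (K t * V0ᵀ) * (V0 * V0ᵀ)‖ := by rw [Matrix.mul_assoc]
      _ ≤ ‖G (K t * V0ᵀ)‖ := norm_mul_proj_le V0 hV0 _
      _ ≤ B := hbound _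
  have hptwise : ∀ s ∈ Set.uIoc t0 t1, ‖C - G (F s) * P‖ ≤ cl * B * h := by
    intro s hs
    rw [Set.uIoc_of_le ht01] at hs
    have hs' : s ∈ Set.Icc t0 t1 := ⟨hs.1.le, hs.2⟩
    calc ‖C - G (F s) * P‖ = ‖(G (F t0) - G (F s)) * P‖ := by rw [hCdef, Matrix.sub_mul]
      _ ≤ ‖G (F t0) - G (F s)‖ := norm_mul_proj_le V0 hV0 _
      _ ≤ cl * ‖F t0 - F s‖ := hlip _ _
      _ = cl * ‖K t0 - K s‖ := by
          rw [hFdef]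
          show cl * ‖K t0 * V0ᵀ - K s * V0ᵀ‖ = _
          rw [← Matrix.sub_mul, norm_mul_vt V0 hV0]
      _ = cl * ‖K s - K t0‖ := by rw [norm_sub_rev]
      _ ≤ cl * (B * ‖s - t0‖) := by
          exact mul_le_mul_of_nonneg_left (hKbd s hs') hcl.le
      _ ≤ cl * (B * h) := by
          apply mul_le_mul_of_nonneg_left _ hcl.le
          apply mul_le_mul_of_nonneg_left _ hB.le
          rw [Real.norm_eq_abs, abs_of_nonneg (by linarith [hs.1] : (0:ℝ) ≤ s - t0)]
          have := hs.2; rw [ht1] at this; linarith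
      _ = cl * B * h := by ring
  have hnormint : ‖∫ s in t0..t1, (C - G (F s) * P)‖ ≤ cl * B * h * |t1 - t0| :=
    intervalIntegral.norm_integral_le_of_norm_le_const hptwise
  rw [norm_smul, Real.norm_eq_abs, abs_of_pos (by positivity : (0:ℝ) < 1/h)]
  have habs : |t1 - t0| = h := by rw [ht1]; simp [abs_of_pos hh]
  rw [habs] at hnormint
  calc 1 / h * ‖∫ s in t0..t1, (C - G (F s) * P)‖ ≤ 1 / h * (cl * B * h * h) := by
        apply mul_le_mul_of_nonneg_left hnormint (by positivity)
    _ = cl * B * h := by field_simp
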